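/- arXiv:1211.0319 — 2 statements merged into one kernel-verified Lean document; each statement's English description precedes it below -/
import Mathlib

section
/- For v > (1/2)Aρ_jam (with A, B, ρ_jam > 0), the pair ρ = 2ρ_jam(2v - Aρ_jam)/(3v - 2Aρ_jam + √(9v² - 4Aρ_jam v)) and q̂ = (3v - 2Aρ_jam + √(9v² - 4Aρ_jam v))/(2Bρ_jam) satisfies the system v = (A + B q̂)(ρ_jam - ρ) and Aρ + B q̂(2ρ - ρ_jam) = v, and moreover ρ ≥ 0 and q̂ > 0. -/
/-- For v > Aρ_jam/2, the positive root branch solves the PTM without source,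
with ρ ≥ 0 and qhat > 0. -/
theorem ptm_no_source_high_speed_branch
    (A B ρjam v : ℝ) (hA : 0 < A) (hB : 0 < B) (hρjam : 0 < ρjam)
    (hv : v > A * ρjam / 2) :
    let s := Real.sqrt (9 * v ^ 2 - 4 * A * ρjam * v)
    let ρ := 2 * ρjam * (2 * v - A * ρjam) / (3 * v - 2 * A * ρjam + s)
    let qhat := (3 * v - 2 * A * ρjam + s) / (2 * B * ρjam)
    A * (ρjam - ρ) + B * qhat * (ρjam - ρ) = v ∧
      A * ρ + B * qhat * (2 * ρ - ρjam) = v ∧ 0 ≤ ρ ∧ 0 < qhat := by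
  intro s ρ qhat
  have hv0 : 0 < v := lt_trans (by positivity) hv
  have hnn : 0 ≤ 9 * v ^ 2 - 4 * A * ρjam * v := by nlinarith
  have hs0 : 0 ≤ s := Real.sqrt_nonneg _
  have hs2 : s ^ 2 = 9 * v ^ 2 - 4 * A * ρjam * v := Real.sq_sqrt hnn
  have hsv : v < s := by nlinarith
  have hD : 0 < 3 * v - 2 * A * ρjam + s := by nlinarith
  have hDne : 3 * v - 2 * A * ρjam + s ≠ 0 := ne_of_gt hD
  refine ⟨?_, ?_, ?_, ?_⟩
  · show A * (ρjam - 2 * ρjam * (2 * v - A * ρjam) / (3 * v - 2 * A * ρjam + s))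
      + B * ((3 * v - 2 * A * ρjam + s) / (2 * B * ρjam)) *
        (ρjam - 2 * ρjam * (2 * v - A * ρjam) / (3 * v - 2 * A * ρjam + s)) = v
    have hD2 : v * 3 - A * ρjam * 2 + s ≠ 0 := by intro h; linarith
    have hD3 : v * 3 - A * 2 * ρjam + s ≠ 0 := by intro h; linarith
    field_simp
    linear_combination hs2
  · show A * (2 * ρjam * (2 * v - A * ρjam) / (3 * v - 2 * A * ρjam + s))
      + B * ((3 * v - 2 * A * ρjam + s) / (2 * B * ρjam)) *
        (2 * (2 * ρjam * (2 * v - A * ρjam) / (3 * v - 2 * A * ρjam + s)) - ρjam) = v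
    have hD2 : v * 3 - A * ρjam * 2 + s ≠ 0 := by intro h; linarith
    have hD3 : v * 3 - A * 2 * ρjam + s ≠ 0 := by intro h; linarith
    field_simp
    linear_combination -hs2
  · have h1 : 0 ≤ 2 * ρjam * (2 * v - A * ρjam) := by nlinarith
    exact div_nonneg h1 hD.le
  · exact div_pos hD (by positivity)
end

section
/- For (4/9)Aρ_jam < v ≤ (1/2)Aρ_jam (with A, B, ρ_jam > 0), the pair ρ = 2ρ_jam(2v - Aρ_jam)/(3v - 2Aρ_jam - √(9v² - 4Aρ_jam v)) and q̂ = (3v - 2Aρ_jam - √(9v² - 4Aρ_jam v))/(2Bρ_jam) satisfies v = (A + B q̂)(ρ_jam - ρ) and Aρ + B q̂(2ρ - ρ_jam) = v, with ρ ≥ 0 and q̂ < 0. -/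
/-- For (4/9)Aρ_jam < v ≤ Aρ_jam/2, the negative root branch solves the PTM
without source, with ρ ≥ 0 and qhat < 0. -/
theorem ptm_no_source_low_speed_branch
    (A B ρjam v : ℝ) (hA : 0 < A) (hB : 0 < B) (hρjam : 0 < ρjam)
    (hv1 : (4 / 9) * A * ρjam < v) (hv2 : v ≤ A * ρjam / 2) :
    let s := Real.sqrt (9 * v ^ 2 - 4 * A * ρjam * v)
    let ρ := 2 * ρjam * (2 * v - A * ρjam) / (3 * v - 2 * A * ρjam - s)
    let qhat := (3 * v - 2 * A * ρjam - s) / (2 * B * ρjam)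
    A * (ρjam - ρ) + B * qhat * (ρjam - ρ) = v ∧
      A * ρ + B * qhat * (2 * ρ - ρjam) = v ∧ 0 ≤ ρ ∧ qhat < 0 := by
  intro s ρ qhat
  have hv0 : 0 < v := lt_trans (by positivity) hv1
  have hnn : 0 ≤ 9 * v ^ 2 - 4 * A * ρjam * v := by nlinarith
  have hsq : s ^ 2 = 9 * v ^ 2 - 4 * A * ρjam * v := Real.sq_sqrt hnn
  have hs0 : 0 ≤ s := Real.sqrt_nonneg _
  have hD : 3 * v - 2 * A * ρjam - s < 0 := by nlinarith
  have hDne : 3 * v - 2 * A * ρjam - s ≠ 0 := ne_of_lt hD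
  have hρdef : ρ = 2 * ρjam * (2 * v - A * ρjam) / (3 * v - 2 * A * ρjam - s) := rfl
  have hqdef : qhat = (3 * v - 2 * A * ρjam - s) / (2 * B * ρjam) := rfl
  refine ⟨?_, ?_, ?_, ?_⟩
  · rw [hρdef, hqdef]
    field_simp
    have hD' : v * 3 - 2 * A * ρjam - s ≠ 0 := by intro h; apply hDne; linarith
    field_simp
    linear_combination hsq
  · rw [hρdef, hqdef]
    have hD'' : v * 3 - A * 2 * ρjam - s ≠ 0 := by intro h; apply hDne; linarith
    field_simp
    linear_combination (-1 : ℝ) * hsq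
  · rw [hρdef]
    rw [div_nonneg_iff]
    right
    constructor <;> nlinarith
  · rw [hqdef]
    apply div_neg_of_neg_of_pos hD (by positivity)
end
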